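/- Convergence of marginals for M = 2: assume a dual-optimal triple (û^(1), û^(2), û^(3)) exists, and set D := max(λ(K^(1)), λ(K^(2))) and d := max(d_H(u^(0,1), û^(1)), d_H(u^(0,3), û^(3))). Then for every n ≥ 1: d_H(a, P^(n,1)1_{m2}) = 0, d_H(b, (P^(n,2))ᵀ1_{m2}) = 0, and d_H((P^(n,1))ᵀ1_{m1}, P^(n,2)1_{m3}) ≤ 2d(1 + D²)D^{2n−1}. -/

import Mathlib

open Matrix Finset Real

noncomputable section

/-- The Hilbert projective (pseudo)metric on the positive orthant:
`d_H(u,v) = log((max_i u_i/v_i) · (max_j v_j/u_j))`. -/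
def dH {m : ℕ} (u v : Fin m → ℝ) : ℝ :=
  Real.log ((⨆ i, u i / v i) * (⨆ j, v j / u j))

/-- Birkhoff's ratio `γ(A) = max_{i,j,k,l} (A_{ik}A_{jl})/(A_{jk}A_{il})`. -/
def birkhoffGamma {n m : ℕ} (A : Matrix (Fin n) (Fin m) ℝ) : ℝ :=
  ⨆ p : (Fin n × Fin n) × Fin m × Fin m,
    A p.1.1 p.2.1 * A p.1.2 p.2.2 / (A p.1.2 p.2.1 * A p.1.1 p.2.2)

/-- Birkhoff's contraction coefficient `λ(A) = (√γ(A) − 1)/(√γ(A) + 1)`. -/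
def birkhoffLambda {n m : ℕ} (A : Matrix (Fin n) (Fin m) ℝ) : ℝ :=
  (Real.sqrt (birkhoffGamma A) - 1) / (Real.sqrt (birkhoffGamma A) + 1)

/-- The dual (Lagrangian) function for the sequentially composed OT problem with `M = 2`. -/
def dual2 {m1 m2 m3 : ℕ} (a : Fin m1 → ℝ) (b : Fin m3 → ℝ) (ε : ℝ)
    (C1 : Matrix (Fin m1) (Fin m2) ℝ) (C2 : Matrix (Fin m2) (Fin m3) ℝ)
    (f1 : Fin m1 → ℝ) (f2 : Fin m2 → ℝ) (f3 : Fin m3 → ℝ) : ℝ :=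
  (∑ j, f1 j * a j) + (∑ l, f3 l * b l)
    - ε * ((∑ j, ∑ k, Real.exp ((f1 j - f2 k - C1 j k) / ε))
      + ∑ k, ∑ l, Real.exp ((f2 k + f3 l - C2 k l) / ε))

/-- The matrix `diag(u) K diag(1/v)` induced by the first pair of Sinkhorn vectors. -/
def indMat1 {m1 m2 : ℕ} (u : Fin m1 → ℝ) (K : Matrix (Fin m1) (Fin m2) ℝ)
    (v : Fin m2 → ℝ) : Matrix (Fin m1) (Fin m2) ℝ :=
  Matrix.diagonal u * K * Matrix.diagonal (fun k => (v k)⁻¹)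

/-- The matrix `diag(v) K diag(w)` induced by the second pair of Sinkhorn vectors. -/
def indMat2 {m2 m3 : ℕ} (v : Fin m2 → ℝ) (K : Matrix (Fin m2) (Fin m3) ℝ)
    (w : Fin m3 → ℝ) : Matrix (Fin m2) (Fin m3) ℝ :=
  Matrix.diagonal v * K * Matrix.diagonal w


lemma dG_aux (g : ℝ) (hg : 1 ≤ g) (x : ℝ) (hx : 1 < x) :
    HasDerivAt (fun y : ℝ => (g-1)/(g+1) * Real.log y - Real.log (1+g*y) + Real.log (g+y))
      ((g-1)/(g+1) * x⁻¹ - g/(1+g*x) + 1/(g+x)) x := by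
  have hx0 : (0:ℝ) < x := by linarith
  have h1 : (0:ℝ) < 1 + g*x := by nlinarith
  have h2 : (0:ℝ) < g + x := by nlinarith
  have d1 : HasDerivAt (fun y : ℝ => (g-1)/(g+1) * Real.log y) ((g-1)/(g+1) * x⁻¹) x :=
    (Real.hasDerivAt_log (ne_of_gt hx0)).const_mul _
  have d2 : HasDerivAt (fun y : ℝ => Real.log (1+g*y)) (g / (1+g*x)) x := by
    have h : HasDerivAt (fun y : ℝ => 1+g*y) g x := by
      simpa using ((hasDerivAt_id x).const_mul g).const_add 1
    have := (Real.hasDerivAt_log (ne_of_gt h1)).comp x h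
    simpa [div_eq_inv_mul, Function.comp_def] using this
  have d3 : HasDerivAt (fun y : ℝ => Real.log (g+y)) (1 / (g+x)) x := by
    have h : HasDerivAt (fun y : ℝ => g+y) 1 x := by
      simpa using (hasDerivAt_id x).const_add g
    have := (Real.hasDerivAt_log (ne_of_gt h2)).comp x h
    simpa [div_eq_inv_mul, Function.comp_def] using this
  exact (d1.sub d2).add d3

/-- Key scalar inequality: for `g, σ ≥ 1`, `(1+gσ)/(g+σ) ≤ σ^((g-1)/(g+1))`. -/
lemma key_rpow (g : ℝ) (hg : 1 ≤ g) : ∀ σ : ℝ, 1 ≤ σ →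
    (1 + g*σ) / (g + σ) ≤ σ ^ ((g-1)/(g+1)) := by
  intro σ hσ
  have hg0 : (0:ℝ) < g := by linarith
  have hσ0 : (0:ℝ) < σ := by linarith
  set c : ℝ := (g-1)/(g+1) with hc
  have hG : MonotoneOn (fun x : ℝ => c * Real.log x - Real.log (1+g*x) + Real.log (g+x))
      (Set.Ici 1) := by
    apply monotoneOn_of_deriv_nonneg (convex_Ici 1)
    · apply ContinuousOn.add
      · apply ContinuousOn.sub
        · exact (continuousOn_const.mul (Real.continuousOn_log.mono (by
            intro x hx; simp at hx ⊢; intro h; nlinarith)))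
        · apply ContinuousOn.comp Real.continuousOn_log (by fun_prop)
          intro x hx; simp at hx ⊢; nlinarith
      · apply ContinuousOn.comp Real.continuousOn_log (by fun_prop)
        intro x hx; simp at hx ⊢; nlinarith
    · intro x hx
      rw [interior_Ici] at hx
      exact (dG_aux g hg x hx).differentiableAt.differentiableWithinAt
    · intro x hx
      rw [interior_Ici] at hx
      have dG := dG_aux g hg x hx
      have hx1 : (1:ℝ) < x := hx
      have hx0 : (0:ℝ) < x := by linarith
      have h1 : (0:ℝ) < 1 + g*x := by nlinarith
      have h2 : (0:ℝ) < g + x := by nlinarith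
      rw [dG.deriv]
      have hgp1 : (0:ℝ) < g + 1 := by linarith
      have key : (g-1)/(g+1) * x⁻¹ - g/(1+g*x) + 1/(g+x)
          = (g-1)*g*(x-1)^2 / ((g+1)*x*(1+g*x)*(g+x)) := by
        field_simp
        ring
      rw [key]
      apply div_nonneg
      · have h5 : 0 ≤ g - 1 := by linarith
        positivity
      · positivity
  have h1 : (fun x : ℝ => c * Real.log x - Real.log (1+g*x) + Real.log (g+x)) 1
      ≤ (fun x : ℝ => c * Real.log x - Real.log (1+g*x) + Real.log (g+x)) σ :=
    hG (Set.self_mem_Ici) (by exact hσ) hσ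
  simp only [Real.log_one, mul_zero, zero_sub] at h1
  have h2 : Real.log (1+g*σ) - Real.log (g+σ) ≤ c * Real.log σ := by
    have heq : Real.log (1+g*1) = Real.log (g+1) := by norm_num [add_comm]
    rw [heq] at h1
    linarith
  have h3 : (0:ℝ) < 1 + g*σ := by nlinarith
  have h4 : (0:ℝ) < g + σ := by nlinarith
  rw [div_le_iff₀ h4]
  calc (1+g*σ) = Real.exp (Real.log (1+g*σ)) := (Real.exp_log h3).symm
    _ ≤ Real.exp (c * Real.log σ + Real.log (g+σ)) := by
        apply Real.exp_le_exp.mpr; linarith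
    _ = σ ^ c * (g+σ) := by
        rw [Real.exp_add, Real.exp_log h4, ← Real.log_rpow hσ0, Real.exp_log (Real.rpow_pos_of_pos hσ0 c)]



/-- Elementary bilinear inequality (heart of Birkhoff). -/
lemma Epoly (g σ P1 P2 Q1 Q2 : ℝ) (hg : 1 ≤ g) (hσ : 1 ≤ σ)
    (hP1 : 0 ≤ P1) (hP2 : 0 ≤ P2) (hQ1 : 0 ≤ Q1) (hQ2 : 0 ≤ Q2)
    (hc : P2*Q1 ≤ g^2*(P1*Q2)) :
    (g+σ)^2 * ((P1 + σ^2*P2)*(Q1+Q2)) ≤ (1+g*σ)^2 * ((P1+P2)*(Q1+σ^2*Q2)) := by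
  have he1 : (0:ℝ) ≤ g^2 - 1 := by nlinarith
  have he2 : (0:ℝ) ≤ σ^2 - 1 := by nlinarith
  have hE : (1+g*σ)^2*((P1+P2)*(Q1+σ^2*Q2)) - (g+σ)^2*((P1+σ^2*P2)*(Q1+Q2))
      = (σ^2-1)*((g^2-1)*(P1*Q1+σ^2*(P2*Q2)) + g*(g+2*σ+g*σ^2)*(P1*Q2)
        - (1+2*g*σ+σ^2)*(P2*Q1)) := by ring
  have hbr : 0 ≤ (g^2-1)*(P1*Q1+σ^2*(P2*Q2)) + g*(g+2*σ+g*σ^2)*(P1*Q2)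
      - (1+2*g*σ+σ^2)*(P2*Q1) := by
    rcases le_or_gt ((1+2*g*σ+σ^2)*Q1) (σ^2*(g^2-1)*Q2) with hcase | hcase
    · have h1 : (1+2*g*σ+σ^2)*(P2*Q1) ≤ σ^2*(g^2-1)*(P2*Q2) := by
        calc (1+2*g*σ+σ^2)*(P2*Q1) = P2 * ((1+2*g*σ+σ^2)*Q1) := by ring
          _ ≤ P2 * (σ^2*(g^2-1)*Q2) := by
              exact mul_le_mul_of_nonneg_left hcase hP2
          _ = σ^2*(g^2-1)*(P2*Q2) := by ring
      nlinarith [mul_nonneg (mul_nonneg he1 hP1) hQ1,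
        mul_nonneg (mul_nonneg (by positivity : (0:ℝ) ≤ g*(g+2*σ+g*σ^2)) hP1) hQ2,
        mul_nonneg (mul_nonneg he1 hP2) hQ2]
    · rcases eq_or_lt_of_le hQ1 with hQ1' | hQ1'
      · rw [← hQ1']
        nlinarith [mul_nonneg (mul_nonneg he1 hP2) hQ2,
          mul_nonneg (mul_nonneg (by positivity : (0:ℝ) ≤ g*(g+2*σ+g*σ^2)) hP1) hQ2]
      · have key : Q1 * ((g^2-1)*(P1*Q1+σ^2*(P2*Q2)) + g*(g+2*σ+g*σ^2)*(P1*Q2)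
            - (1+2*g*σ+σ^2)*(P2*Q1))
            = (σ^2*(g^2-1)*Q2 - (1+2*g*σ+σ^2)*Q1)*(P2*Q1 - g^2*(P1*Q2))
              + (g^2-1)*(P1*(Q1 - g*σ*Q2)^2) := by ring
        have h1 : 0 ≤ (σ^2*(g^2-1)*Q2 - (1+2*g*σ+σ^2)*Q1)*(P2*Q1 - g^2*(P1*Q2)) := by
          have := mul_nonneg (a := -(σ^2*(g^2-1)*Q2 - (1+2*g*σ+σ^2)*Q1))
            (b := -(P2*Q1 - g^2*(P1*Q2))) (by linarith) (by linarith)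
          nlinarith [this]
        have h2 : 0 ≤ (g^2-1)*(P1*(Q1 - g*σ*Q2)^2) := by positivity
        nlinarith [key, h1, h2]
    
  nlinarith [mul_nonneg he2 hbr]


/-- Grouped (vertex) inequality with general endpoints `α ≤ β`. -/
lemma Nab (g α β : ℝ) (hg : 1 ≤ g) (hα : 0 < α) (hαβ : α ≤ β)
    (P1 P2 Q1 Q2 : ℝ) (hP1 : 0 ≤ P1) (hP2 : 0 ≤ P2) (hQ1 : 0 ≤ Q1) (hQ2 : 0 ≤ Q2)
    (hc : P2*Q1 ≤ g^2*(P1*Q2)) :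
    (α*P1 + β*P2)*(Q1+Q2) ≤ (β/α) ^ ((g-1)/(g+1)) * ((P1+P2)*(α*Q1 + β*Q2)) := by
  have hβ : 0 < β := lt_of_lt_of_le hα hαβ
  set s : ℝ := β/α with hs
  have hs1 : 1 ≤ s := (one_le_div hα).mpr hαβ
  set σ : ℝ := Real.sqrt s with hσdef
  have hσ1 : 1 ≤ σ := by
    rw [hσdef]; rw [show (1:ℝ) = Real.sqrt 1 by simp]; exact Real.sqrt_le_sqrt hs1
  have hσsq : σ^2 = s := Real.sq_sqrt (by linarith)
  have hβ' : β = α * σ^2 := by rw [hσsq, hs]; field_simp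
  -- key rpow bound
  have hkey := key_rpow g hg σ hσ1
  have hgσ : (0:ℝ) < g + σ := by linarith
  have hkey2 : (1+g*σ)^2 ≤ (g+σ)^2 * s ^ ((g-1)/(g+1)) := by
    have h1 : 1 + g*σ ≤ σ ^ ((g-1)/(g+1)) * (g+σ) := by
      rw [div_le_iff₀ hgσ] at hkey; linarith
    have h2 : (1+g*σ)^2 ≤ (σ ^ ((g-1)/(g+1)) * (g+σ))^2 := by
      apply pow_le_pow_left₀ (by positivity) h1
    calc (1+g*σ)^2 ≤ (σ ^ ((g-1)/(g+1)) * (g+σ))^2 := h2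
      _ = (g+σ)^2 * (σ ^ ((g-1)/(g+1)))^2 := by ring
      _ = (g+σ)^2 * s ^ ((g-1)/(g+1)) := by
          congr 1
          rw [← Real.rpow_natCast (σ ^ ((g-1)/(g+1))) 2, ← Real.rpow_mul (by positivity),
            ← hσsq, ← Real.rpow_natCast σ 2, ← Real.rpow_mul (by positivity)]
          norm_num
          rw [mul_comm]
  have hE := Epoly g σ P1 P2 Q1 Q2 hg hσ1 hP1 hP2 hQ1 hQ2 hc
  have hT : (0:ℝ) ≤ s ^ ((g-1)/(g+1)) := by positivity
  have hprod : 0 ≤ (P1+P2)*(Q1+σ^2*Q2) := by positivity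
  have main : (g+σ)^2 * ((P1 + σ^2*P2)*(Q1+Q2))
      ≤ (g+σ)^2 * (s ^ ((g-1)/(g+1)) * ((P1+P2)*(Q1+σ^2*Q2))) := by
    calc (g+σ)^2 * ((P1 + σ^2*P2)*(Q1+Q2)) ≤ (1+g*σ)^2 * ((P1+P2)*(Q1+σ^2*Q2)) := hE
      _ ≤ (g+σ)^2 * s ^ ((g-1)/(g+1)) * ((P1+P2)*(Q1+σ^2*Q2)) :=
          mul_le_mul_of_nonneg_right hkey2 hprod
      _ = (g+σ)^2 * (s ^ ((g-1)/(g+1)) * ((P1+P2)*(Q1+σ^2*Q2))) := by ring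
  have main2 : (P1 + σ^2*P2)*(Q1+Q2) ≤ s ^ ((g-1)/(g+1)) * ((P1+P2)*(Q1+σ^2*Q2)) :=
    le_of_mul_le_mul_left main (by positivity)
  -- scale by α
  have := mul_le_mul_of_nonneg_left main2 (le_of_lt hα)
  calc (α*P1 + β*P2)*(Q1+Q2) = α * ((P1 + σ^2*P2)*(Q1+Q2)) := by rw [hβ']; ring
    _ ≤ α * (s ^ ((g-1)/(g+1)) * ((P1+P2)*(Q1+σ^2*Q2))) := this
    _ = s ^ ((g-1)/(g+1)) * ((P1+P2)*(α*Q1 + β*Q2)) := by rw [hβ']; ring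


lemma CORE {m : ℕ} [Nonempty (Fin m)] (p q : Fin m → ℝ)
    (hp : ∀ k, 0 < p k) (hq : ∀ k, 0 < q k)
    (α β : ℝ) (hα : 0 < α) (hαβ : α ≤ β)
    (g : ℝ) (hg : 1 ≤ g)
    (cross : ∀ k l, p k * q l ≤ g^2 * (p l * q k)) :
    ∀ r : Fin m → ℝ, (∀ k, α ≤ r k) → (∀ k, r k ≤ β) →
    (∑ k, p k * r k) * (∑ k, q k) ≤ (β/α) ^ ((g-1)/(g+1)) * ((∑ k, p k) * (∑ k, q k * r k)) := by
  set T : ℝ := (β/α) ^ ((g-1)/(g+1)) with hT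
  -- vertex case
  have vertex : ∀ r : Fin m → ℝ, (∀ k, r k = α ∨ r k = β) →
      (∑ k, p k * r k) * (∑ k, q k) ≤ T * ((∑ k, p k) * (∑ k, q k * r k)) := by
    intro r hr
    classical
    set S : Finset (Fin m) := univ.filter (fun k => r k = β) with hS
    set S' : Finset (Fin m) := univ.filter (fun k => ¬ r k = β) with hS'
    have hsplit : ∀ f : Fin m → ℝ, ∑ k, f k * r k
        = α * (∑ k ∈ S', f k) + β * (∑ k ∈ S, f k) := by
      intro f
      rw [← Finset.sum_filter_add_sum_filter_not univ (fun k => r k = β) (fun k => f k * r k)]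
      have h1 : ∑ k ∈ S, f k * r k = β * ∑ k ∈ S, f k := by
        rw [Finset.mul_sum]
        apply Finset.sum_congr rfl
        intro k hk
        rw [hS, Finset.mem_filter] at hk
        rw [hk.2, mul_comm]
      have h2 : ∑ k ∈ S', f k * r k = α * ∑ k ∈ S', f k := by
        rw [Finset.mul_sum]
        apply Finset.sum_congr rfl
        intro k hk
        rw [hS', Finset.mem_filter] at hk
        rcases hr k with h | h
        · rw [h, mul_comm]
        · exact absurd h hk.2
      rw [h1, h2]; ring
    have hsplit0 : ∀ f : Fin m → ℝ, ∑ k, f k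
        = (∑ k ∈ S', f k) + (∑ k ∈ S, f k) := by
      intro f
      rw [← Finset.sum_filter_add_sum_filter_not univ (fun k => r k = β) f]
      ring
    set P1 := ∑ k ∈ S', p k
    set P2 := ∑ k ∈ S, p k
    set Q1 := ∑ k ∈ S', q k
    set Q2 := ∑ k ∈ S, q k
    have hP1 : 0 ≤ P1 := Finset.sum_nonneg fun k _ => (hp k).le
    have hP2 : 0 ≤ P2 := Finset.sum_nonneg fun k _ => (hp k).le
    have hQ1 : 0 ≤ Q1 := Finset.sum_nonneg fun k _ => (hq k).le
    have hQ2 : 0 ≤ Q2 := Finset.sum_nonneg fun k _ => (hq k).le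
    have hcross : P2 * Q1 ≤ g^2 * (P1 * Q2) := by
      rw [Finset.sum_mul_sum]
      have h2 : g^2 * (P1 * Q2) = ∑ k ∈ S, ∑ l ∈ S', g^2 * (p l * q k) := by
        rw [Finset.sum_mul_sum (s := S') (t := S) p q, Finset.mul_sum]
        rw [Finset.sum_comm]
        apply Finset.sum_congr rfl; intro k _
        rw [Finset.mul_sum]
      rw [h2]
      apply Finset.sum_le_sum
      intro k _
      apply Finset.sum_le_sum
      intro l _
      exact cross k l
    have := Nab g α β hg hα hαβ P1 P2 Q1 Q2 hP1 hP2 hQ1 hQ2 hcross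
    rw [hsplit p, hsplit q, hsplit0 p, hsplit0 q]
    exact this
  -- box induction
  have box : ∀ S : Finset (Fin m), ∀ r : Fin m → ℝ, (∀ k, α ≤ r k) → (∀ k, r k ≤ β) →
      (∀ k, k ∉ S → r k = α ∨ r k = β) →
      (∑ k, p k * r k) * (∑ k, q k) ≤ T * ((∑ k, p k) * (∑ k, q k * r k)) := by
    intro S
    classical
    induction S using Finset.induction_on with
    | empty =>
      intro r h1 h2 h3
      exact vertex r (fun k => h3 k (Finset.notMem_empty k))
    | @insert a S ha IH =>
      intro r h1 h2 h3
      rcases eq_or_lt_of_le hαβ with heq | hlt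
      · apply vertex
        intro k
        left
        exact le_antisymm (heq ▸ h2 k) (h1 k)
      · have hsum : ∀ f : Fin m → ℝ, ∀ c : ℝ,
            ∑ k, f k * (Function.update r a c) k = (∑ k, f k * r k) + f a * (c - r a) := by
          intro f c
          have heq : (fun k => f k * Function.update r a c k)
              = Function.update (fun k => f k * r k) a (f a * c) := by
            ext k
            by_cases h : k = a
            · subst h; simp
            · simp [Function.update_apply, h]
          rw [heq, Finset.sum_update_of_mem (Finset.mem_univ a)]
          have : ∑ k, f k * r k = f a * r a + ∑ k ∈ univ \ {a}, f k * r k := by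
            rw [add_comm, Finset.sum_eq_sum_sdiff_singleton_add (Finset.mem_univ a)]
          rw [this]; ring
        have hup : ∀ c : ℝ, c = α ∨ c = β →
            (∑ k, p k * (Function.update r a c) k) * (∑ k, q k)
            ≤ T * ((∑ k, p k) * (∑ k, q k * (Function.update r a c) k)) := by
          intro c hcab
          have hc1 : α ≤ c := by rcases hcab with h | h <;> simp [h, hαβ]
          have hc2 : c ≤ β := by rcases hcab with h | h <;> simp [h, hαβ]
          apply IH
          · intro k
            rcases eq_or_ne k a with h | h
            · rw [h, Function.update_self]; exact hc1
            · rw [Function.update_of_ne h]; exact h1 k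
          · intro k
            rcases eq_or_ne k a with h | h
            · rw [h, Function.update_self]; exact hc2
            · rw [Function.update_of_ne h]; exact h2 k
          · intro k hk
            rcases eq_or_ne k a with h | h
            · subst h
              rw [Function.update_self]
              exact hcab
            · rw [Function.update_of_ne h]
              exact h3 k (by simp [Finset.mem_insert, h, hk])
        have Gα := hup α (Or.inl rfl)
        have Gβ := hup β (Or.inr rfl)
        rw [hsum p α, hsum q α] at Gα
        rw [hsum p β, hsum q β] at Gβ
        have h4 : 0 ≤ (β - r a) * (T * ((∑ k, p k) * ((∑ k, q k * r k) + q a * (α - r a)))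
              - ((∑ k, p k * r k) + p a * (α - r a)) * (∑ k, q k))
            + (r a - α) * (T * ((∑ k, p k) * ((∑ k, q k * r k) + q a * (β - r a)))
              - ((∑ k, p k * r k) + p a * (β - r a)) * (∑ k, q k)) := by
          apply add_nonneg
          · exact mul_nonneg (sub_nonneg.mpr (h2 a)) (sub_nonneg.mpr Gα)
          · exact mul_nonneg (sub_nonneg.mpr (h1 a)) (sub_nonneg.mpr Gβ)
        have hid : (β - r a) * (T * ((∑ k, p k) * ((∑ k, q k * r k) + q a * (α - r a)))
              - ((∑ k, p k * r k) + p a * (α - r a)) * (∑ k, q k))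
            + (r a - α) * (T * ((∑ k, p k) * ((∑ k, q k * r k) + q a * (β - r a)))
              - ((∑ k, p k * r k) + p a * (β - r a)) * (∑ k, q k))
            = (β - α) * (T * ((∑ k, p k) * (∑ k, q k * r k)) - (∑ k, p k * r k) * (∑ k, q k)) := by
          ring
        rw [hid] at h4
        have h5 := (mul_nonneg_iff_of_pos_left (sub_pos.mpr hlt)).mp h4
        linarith
  intro r h1 h2
  exact box univ r h1 h2 (fun k hk => absurd (Finset.mem_univ k) hk)


section helpers
variable {m : ℕ}

lemma le_csup (f : Fin m → ℝ) (i : Fin m) : f i ≤ ⨆ j, f j :=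
  le_ciSup ((Set.finite_range f).bddAbove) i

lemma exists_csup [Nonempty (Fin m)] (f : Fin m → ℝ) : ∃ i, (⨆ j, f j) = f i := by
  obtain ⟨i, hi⟩ := Finite.exists_max f
  exact ⟨i, le_antisymm (ciSup_le hi) (le_csup f i)⟩

lemma sup_div_pos [Nonempty (Fin m)] {u v : Fin m → ℝ} (hu : ∀ i, 0 < u i)
    (hv : ∀ i, 0 < v i) : 0 < ⨆ i, u i / v i := by
  obtain ⟨i⟩ := ‹Nonempty (Fin m)›
  exact lt_of_lt_of_le (div_pos (hu i) (hv i)) (le_csup (fun i => u i / v i) i)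

lemma sax_div_chain {a b c : ℝ} (hb : b ≠ 0) : (a / b) * (b / c) = a / c := by
  rw [div_mul_div_comm, mul_comm a b, mul_div_mul_left _ _ hb]

lemma dH_self [Nonempty (Fin m)] {u : Fin m → ℝ} (hu : ∀ i, 0 < u i) : dH u u = 0 := by
  unfold dH
  have h : (⨆ i, u i / u i) = 1 := by
    have h2 : ∀ i, u i / u i = (1:ℝ) := fun i => div_self (ne_of_gt (hu i))
    simp only [h2, ciSup_const]
  rw [h]; norm_num

lemma dH_nonneg [Nonempty (Fin m)] {u v : Fin m → ℝ} (hu : ∀ i, 0 < u i)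
    (hv : ∀ i, 0 < v i) : 0 ≤ dH u v := by
  apply Real.log_nonneg
  obtain ⟨i⟩ := ‹Nonempty (Fin m)›
  calc (1:ℝ) = (u i / v i) * (v i / u i) := by
        rw [sax_div_chain (ne_of_gt (hv i)), div_self (ne_of_gt (hu i))]
    _ ≤ (⨆ i, u i / v i) * (⨆ j, v j / u j) :=
        mul_le_mul (le_csup (fun i => u i / v i) i) (le_csup (fun j => v j / u j) i)
          (div_pos (hv i) (hu i)).le (sup_div_pos hu hv).le

lemma dH_comm {u v : Fin m → ℝ} : dH u v = dH v u := by
  unfold dH; rw [mul_comm]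

lemma dH_pos_arg [Nonempty (Fin m)] {u v : Fin m → ℝ} (hu : ∀ i, 0 < u i)
    (hv : ∀ i, 0 < v i) : 0 < (⨆ i, u i / v i) * (⨆ j, v j / u j) :=
  mul_pos (sup_div_pos hu hv) (sup_div_pos hv hu)

lemma dH_triangle [Nonempty (Fin m)] {u v w : Fin m → ℝ} (hu : ∀ i, 0 < u i)
    (hv : ∀ i, 0 < v i) (hw : ∀ i, 0 < w i) : dH u w ≤ dH u v + dH v w := by
  unfold dH
  have h1 : (⨆ i, u i / w i) ≤ (⨆ i, u i / v i) * (⨆ i, v i / w i) := by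
    apply ciSup_le
    intro i
    calc u i / w i = (u i / v i) * (v i / w i) :=
        (sax_div_chain (ne_of_gt (hv i))).symm
      _ ≤ _ := mul_le_mul (le_csup (fun i => u i / v i) i) (le_csup (fun i => v i / w i) i)
          (div_pos (hv i) (hw i)).le (sup_div_pos hu hv).le
  have h2 : (⨆ i, w i / u i) ≤ (⨆ i, w i / v i) * (⨆ i, v i / u i) := by
    apply ciSup_le
    intro i
    calc w i / u i = (w i / v i) * (v i / u i) :=
        (sax_div_chain (ne_of_gt (hv i))).symm
      _ ≤ _ := mul_le_mul (le_csup (fun i => w i / v i) i) (le_csup (fun i => v i / u i) i)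
          (div_pos (hv i) (hu i)).le (sup_div_pos hw hv).le
  rw [← Real.log_mul (ne_of_gt (dH_pos_arg hu hv)) (ne_of_gt (dH_pos_arg hv hw))]
  apply Real.log_le_log (dH_pos_arg hu hw)
  calc (⨆ i, u i / w i) * (⨆ i, w i / u i)
      ≤ ((⨆ i, u i / v i) * (⨆ i, v i / w i)) * ((⨆ i, w i / v i) * (⨆ i, v i / u i)) :=
        mul_le_mul h1 h2 (sup_div_pos hw hu).le
          (mul_nonneg (sup_div_pos hu hv).le (sup_div_pos hv hw).le)
    _ = (⨆ i, u i / v i) * (⨆ j, v j / u j) * ((⨆ i, v i / w i) * (⨆ j, w j / v j)) := by ring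

lemma dH_mul_le [Nonempty (Fin m)] {u v u' v' : Fin m → ℝ} (hu : ∀ i, 0 < u i)
    (hv : ∀ i, 0 < v i) (hu' : ∀ i, 0 < u' i) (hv' : ∀ i, 0 < v' i) :
    dH (fun i => u i * v i) (fun i => u' i * v' i) ≤ dH u u' + dH v v' := by
  unfold dH
  simp only []
  have h1 : (⨆ i, u i * v i / (u' i * v' i)) ≤ (⨆ i, u i / u' i) * (⨆ i, v i / v' i) := by
    apply ciSup_le
    intro i
    calc u i * v i / (u' i * v' i) = (u i / u' i) * (v i / v' i) :=
        (div_mul_div_comm _ _ _ _).symm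
      _ ≤ _ := mul_le_mul (le_csup (fun i => u i / u' i) i) (le_csup (fun i => v i / v' i) i)
          (div_pos (hv i) (hv' i)).le (sup_div_pos hu hu').le
  have h2 : (⨆ i, u' i * v' i / (u i * v i)) ≤ (⨆ i, u' i / u i) * (⨆ i, v' i / v i) := by
    apply ciSup_le
    intro i
    calc u' i * v' i / (u i * v i) = (u' i / u i) * (v' i / v i) :=
        (div_mul_div_comm _ _ _ _).symm
      _ ≤ _ := mul_le_mul (le_csup (fun i => u' i / u i) i) (le_csup (fun i => v' i / v i) i)
          (div_pos (hv' i) (hv i)).le (sup_div_pos hu' hu).le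
  have huv : ∀ i, 0 < u i * v i := fun i => mul_pos (hu i) (hv i)
  have huv' : ∀ i, 0 < u' i * v' i := fun i => mul_pos (hu' i) (hv' i)
  rw [← Real.log_mul (ne_of_gt (dH_pos_arg hu hu')) (ne_of_gt (dH_pos_arg hv hv'))]
  apply Real.log_le_log (dH_pos_arg huv huv')
  calc (⨆ i, u i * v i / (u' i * v' i)) * (⨆ i, u' i * v' i / (u i * v i))
      ≤ ((⨆ i, u i / u' i) * (⨆ i, v i / v' i)) * ((⨆ i, u' i / u i) * (⨆ i, v' i / v i)) :=
        mul_le_mul h1 h2 (sup_div_pos huv' huv).le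
          (mul_nonneg (sup_div_pos hu hu').le (sup_div_pos hv hv').le)
    _ = (⨆ i, u i / u' i) * (⨆ j, u' j / u j) * ((⨆ i, v i / v' i) * (⨆ j, v' j / v j)) := by
        ring

lemma dH_inv {u v : Fin m → ℝ} :
    dH (fun i => (u i)⁻¹) (fun i => (v i)⁻¹) = dH v u := by
  unfold dH
  have h1 : (fun i => (u i)⁻¹ / (v i)⁻¹) = fun i => v i / u i := by
    ext i; rw [div_eq_mul_inv, inv_inv, mul_comm, ← div_eq_mul_inv]
  have h2 : (fun i => (v i)⁻¹ / (u i)⁻¹) = fun i => u i / v i := by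
    ext i; rw [div_eq_mul_inv, inv_inv, mul_comm, ← div_eq_mul_inv]
  simp only [h1, h2]

lemma dH_sqrt [Nonempty (Fin m)] {u v : Fin m → ℝ} (hu : ∀ i, 0 < u i)
    (hv : ∀ i, 0 < v i) :
    dH (fun i => Real.sqrt (u i)) (fun i => Real.sqrt (v i)) = (1/2) * dH u v := by
  unfold dH
  have key : ∀ (x y : Fin m → ℝ), (∀ i, 0 < x i) → (∀ i, 0 < y i) →
      (⨆ i, Real.sqrt (x i) / Real.sqrt (y i)) = Real.sqrt (⨆ i, x i / y i) := by
    intro x y hx hy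
    apply le_antisymm
    · apply ciSup_le
      intro i
      rw [← Real.sqrt_div (le_of_lt (hx i))]
      exact Real.sqrt_le_sqrt (le_csup (fun i => x i / y i) i)
    · obtain ⟨i, hi⟩ := exists_csup (fun i => x i / y i)
      rw [hi, Real.sqrt_div (le_of_lt (hx i))]
      exact le_csup (fun i => Real.sqrt (x i) / Real.sqrt (y i)) i
  rw [key u v hu hv, key v u hv hu, ← Real.sqrt_mul (sup_div_pos hu hv).le]
  rw [Real.log_sqrt (dH_pos_arg hu hv).le]
  ring

lemma dH_div_le [Nonempty (Fin m)] {u v u' v' : Fin m → ℝ} (hu : ∀ i, 0 < u i)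
    (hv : ∀ i, 0 < v i) (hu' : ∀ i, 0 < u' i) (hv' : ∀ i, 0 < v' i) :
    dH (fun i => u i / v i) (fun i => u' i / v' i) ≤ dH u u' + dH v' v := by
  have h1 : (fun i => u i / v i) = fun i => u i * (v i)⁻¹ :=
    funext fun i => div_eq_mul_inv _ _
  have h2 : (fun i => u' i / v' i) = fun i => u' i * (v' i)⁻¹ :=
    funext fun i => div_eq_mul_inv _ _
  rw [h1, h2]
  calc dH (fun i => u i * (v i)⁻¹) (fun i => u' i * (v' i)⁻¹)
      ≤ dH u u' + dH (fun i => (v i)⁻¹) (fun i => (v' i)⁻¹) :=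
        dH_mul_le hu (fun i => inv_pos.mpr (hv i)) hu' (fun i => inv_pos.mpr (hv' i))
    _ = dH u u' + dH v' v := by rw [dH_inv]

end helpers

section birkhoff
variable {n m : ℕ}

lemma one_le_gamma [Nonempty (Fin n)] [Nonempty (Fin m)] {A : Matrix (Fin n) (Fin m) ℝ}
    (hA : ∀ i k, 0 < A i k) : 1 ≤ birkhoffGamma A := by
  obtain ⟨i⟩ := ‹Nonempty (Fin n)›
  obtain ⟨k⟩ := ‹Nonempty (Fin m)›
  have h : A i k * A i k / (A i k * A i k) = 1 :=
    div_self (ne_of_gt (mul_pos (hA i k) (hA i k)))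
  unfold birkhoffGamma
  calc (1:ℝ) = A i k * A i k / (A i k * A i k) := h.symm
    _ ≤ _ := le_ciSup (f := fun p : (Fin n × Fin n) × Fin m × Fin m =>
        A p.1.1 p.2.1 * A p.1.2 p.2.2 / (A p.1.2 p.2.1 * A p.1.1 p.2.2))
        ((Set.finite_range _).bddAbove) ((i,i),(k,k))

lemma gamma_bound [Nonempty (Fin n)] [Nonempty (Fin m)] {A : Matrix (Fin n) (Fin m) ℝ}
    (hA : ∀ i k, 0 < A i k) (i j : Fin n) (k l : Fin m) :
    A i k * A j l ≤ birkhoffGamma A * (A j k * A i l) := by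
  have h : A i k * A j l / (A j k * A i l) ≤ birkhoffGamma A := by
    unfold birkhoffGamma
    exact le_ciSup (f := fun p : (Fin n × Fin n) × Fin m × Fin m =>
        A p.1.1 p.2.1 * A p.1.2 p.2.2 / (A p.1.2 p.2.1 * A p.1.1 p.2.2))
        ((Set.finite_range _).bddAbove) ((i,j),(k,l))
  rwa [div_le_iff₀ (mul_pos (hA j k) (hA i l))] at h

lemma lambda_nonneg [Nonempty (Fin n)] [Nonempty (Fin m)] {A : Matrix (Fin n) (Fin m) ℝ}
    (hA : ∀ i k, 0 < A i k) : 0 ≤ birkhoffLambda A := by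
  have h1 : 1 ≤ Real.sqrt (birkhoffGamma A) := by
    rw [show (1:ℝ) = Real.sqrt 1 by simp]
    exact Real.sqrt_le_sqrt (one_le_gamma hA)
  unfold birkhoffLambda
  apply div_nonneg <;> linarith

lemma birkhoffGamma_transpose (A : Matrix (Fin n) (Fin m) ℝ) :
    birkhoffGamma Aᵀ = birkhoffGamma A := by
  unfold birkhoffGamma
  rw [iSup, iSup]
  congr 1
  ext x
  simp only [Set.mem_range]
  constructor
  · rintro ⟨⟨⟨i,j⟩,k,l⟩, rfl⟩
    refine ⟨((k,l),(i,j)), ?_⟩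
    simp only [Matrix.transpose_apply]
    rw [mul_comm (A l i) (A k j)]
  · rintro ⟨⟨⟨i,j⟩,k,l⟩, rfl⟩
    refine ⟨((k,l),(i,j)), ?_⟩
    simp only [Matrix.transpose_apply]
    rw [mul_comm (A j k) (A i l)]

lemma birkhoffLambda_transpose (A : Matrix (Fin n) (Fin m) ℝ) :
    birkhoffLambda Aᵀ = birkhoffLambda A := by
  unfold birkhoffLambda
  rw [birkhoffGamma_transpose]

lemma mulVec_pos [Nonempty (Fin m)] {A : Matrix (Fin n) (Fin m) ℝ} {u : Fin m → ℝ}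
    (hA : ∀ i k, 0 < A i k) (hu : ∀ k, 0 < u k) : ∀ i, 0 < (A *ᵥ u) i := by
  intro i
  simp only [Matrix.mulVec, dotProduct]
  exact Finset.sum_pos (fun k _ => mul_pos (hA i k) (hu k)) Finset.univ_nonempty

lemma birkhoff_contract [Nonempty (Fin n)] [Nonempty (Fin m)]
    {A : Matrix (Fin n) (Fin m) ℝ} (hA : ∀ i k, 0 < A i k)
    {u v : Fin m → ℝ} (hu : ∀ k, 0 < u k) (hv : ∀ k, 0 < v k) :
    dH (A *ᵥ u) (A *ᵥ v) ≤ birkhoffLambda A * dH u v := by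
  have hγ1 : 1 ≤ birkhoffGamma A := one_le_gamma hA
  have hg1 : 1 ≤ Real.sqrt (birkhoffGamma A) := by
    rw [show (1:ℝ) = Real.sqrt 1 by simp]
    exact Real.sqrt_le_sqrt hγ1
  have hgsq : (Real.sqrt (birkhoffGamma A))^2 = birkhoffGamma A := Real.sq_sqrt (by linarith)
  obtain ⟨k1, hk1⟩ := exists_csup (fun k => u k / v k)
  obtain ⟨k2, hk2⟩ := exists_csup (fun k => v k / u k)
  have hαpos : 0 < u k2 / v k2 := div_pos (hu k2) (hv k2)
  have hrlo : ∀ k, u k2 / v k2 ≤ u k / v k := by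
    intro k
    have h : v k / u k ≤ v k2 / u k2 := hk2 ▸ le_csup (fun k => v k / u k) k
    rw [div_le_div_iff₀ (hu k) (hu k2)] at h
    rw [div_le_div_iff₀ (hv k2) (hv k)]
    linarith
  have hrhi : ∀ k, u k / v k ≤ u k1 / v k1 := fun k => hk1 ▸ le_csup (fun k => u k / v k) k
  have hαβ : u k2 / v k2 ≤ u k1 / v k1 := hrlo k1
  have hdHuv : dH u v = Real.log ((u k1 / v k1) / (u k2 / v k2)) := by
    unfold dH
    rw [hk1, hk2]
    congr 1
    have h1 := ne_of_gt (hu k2)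
    have h2 := ne_of_gt (hv k2)
    have h3 := ne_of_gt (hv k1)
    field_simp
  obtain ⟨i1, hi1⟩ := exists_csup (fun i => (A *ᵥ u) i / (A *ᵥ v) i)
  obtain ⟨j1, hj1⟩ := exists_csup (fun i => (A *ᵥ v) i / (A *ᵥ u) i)
  have hAu := mulVec_pos hA hu
  have hAv := mulVec_pos hA hv
  have hcore := CORE (fun k => A i1 k * v k) (fun k => A j1 k * v k)
    (fun k => mul_pos (hA i1 k) (hv k)) (fun k => mul_pos (hA j1 k) (hv k))
    (u k2 / v k2) (u k1 / v k1) hαpos hαβ (Real.sqrt (birkhoffGamma A)) hg1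
    (by
      intro k l
      have h := gamma_bound hA i1 j1 k l
      calc A i1 k * v k * (A j1 l * v l) = (A i1 k * A j1 l) * (v k * v l) := by ring
        _ ≤ (birkhoffGamma A * (A j1 k * A i1 l)) * (v k * v l) :=
            mul_le_mul_of_nonneg_right h (le_of_lt (mul_pos (hv k) (hv l)))
        _ = (Real.sqrt (birkhoffGamma A))^2 * (A i1 l * v l * (A j1 k * v k)) := by
            rw [hgsq]; ring)
    (fun k => u k / v k) hrlo hrhi
  have e1 : ∑ k, (A i1 k * v k) * (u k / v k) = (A *ᵥ u) i1 := by
    simp only [Matrix.mulVec, dotProduct]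
    apply Finset.sum_congr rfl
    intro k _
    rw [mul_assoc, mul_comm (v k), div_mul_cancel₀ _ (ne_of_gt (hv k))]
  have e2 : ∑ k, (A j1 k * v k) * (u k / v k) = (A *ᵥ u) j1 := by
    simp only [Matrix.mulVec, dotProduct]
    apply Finset.sum_congr rfl
    intro k _
    rw [mul_assoc, mul_comm (v k), div_mul_cancel₀ _ (ne_of_gt (hv k))]
  have e3 : ∑ k, A i1 k * v k = (A *ᵥ v) i1 := by
    simp only [Matrix.mulVec, dotProduct]
  have e4 : ∑ k, A j1 k * v k = (A *ᵥ v) j1 := by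
    simp only [Matrix.mulVec, dotProduct]
  rw [e1, e2, e3, e4] at hcore
  have hratio : 0 < (u k1 / v k1) / (u k2 / v k2) :=
    div_pos (div_pos (hu k1) (hv k1)) hαpos
  have step : ((A *ᵥ u) i1 / (A *ᵥ v) i1) * ((A *ᵥ v) j1 / (A *ᵥ u) j1)
      ≤ ((u k1 / v k1) / (u k2 / v k2))
        ^ ((Real.sqrt (birkhoffGamma A) - 1)/(Real.sqrt (birkhoffGamma A) + 1)) := by
    rw [div_mul_div_comm, div_le_iff₀ (mul_pos (hAv i1) (hAu j1))]
    exact hcore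
  calc dH (A *ᵥ u) (A *ᵥ v)
      = Real.log (((A *ᵥ u) i1 / (A *ᵥ v) i1) * ((A *ᵥ v) j1 / (A *ᵥ u) j1)) := by
        unfold dH
        rw [hi1, hj1]
    _ ≤ Real.log (((u k1 / v k1) / (u k2 / v k2))
        ^ ((Real.sqrt (birkhoffGamma A) - 1)/(Real.sqrt (birkhoffGamma A) + 1))) :=
        Real.log_le_log (mul_pos (div_pos (hAu i1) (hAv i1)) (div_pos (hAv j1) (hAu j1))) step
    _ = ((Real.sqrt (birkhoffGamma A) - 1)/(Real.sqrt (birkhoffGamma A) + 1))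
          * Real.log ((u k1 / v k1) / (u k2 / v k2)) := Real.log_rpow hratio _
    _ = birkhoffLambda A * dH u v := by
        rw [hdHuv]
        rfl

end birkhoff


lemma max_lin_exp {a c ε th : ℝ} (ha : 0 < a) (hc : 0 < c) (hε : 0 < ε)
    (h : ∀ t : ℝ, t*a - ε*(c*Real.exp (t/ε)) ≤ th*a - ε*(c*Real.exp (th/ε))) :
    c * Real.exp (th/ε) = a := by
  set ts : ℝ := ε * Real.log (a/c) with hts
  have hexp : Real.exp (ts/ε) = a/c := by
    rw [hts, mul_comm, mul_div_assoc, div_self (ne_of_gt hε), mul_one]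
    exact Real.exp_log (div_pos ha hc)
  have h1 := h ts
  set x : ℝ := (th - ts)/ε with hx
  have hexp2 : Real.exp (th/ε) = (a/c) * Real.exp x := by
    rw [← hexp, ← Real.exp_add, hx]
    congr 1
    field_simp
    ring
  have hth : th = ts + ε * x := by rw [hx]; field_simp; ring
  rw [hexp, hexp2, hth] at h1
  have hca : c * (a/c) = a := by field_simp
  have hca2 : c * (a/c * Real.exp x) = a * Real.exp x := by field_simp
  rw [hca, hca2] at h1
  have h2 : Real.exp x ≤ x + 1 := by
    have hεa : 0 < ε * a := mul_pos hε ha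
    nlinarith [h1]
  have hx0 : x = 0 := by
    by_contra hne
    have := Real.add_one_lt_exp hne
    linarith
  rw [hexp2, hx0]
  rw [Real.exp_zero, mul_one, hca]

lemma max_twoexp {A B ε th : ℝ} (hA : 0 < A) (hB : 0 < B) (hε : 0 < ε)
    (h : ∀ t : ℝ, A*Real.exp (-th/ε) + B*Real.exp (th/ε)
      ≤ A*Real.exp (-t/ε) + B*Real.exp (t/ε)) :
    A * Real.exp (-th/ε) = B * Real.exp (th/ε) := by
  set sa := Real.sqrt A with hsa
  set sb := Real.sqrt B with hsb
  have hsa2 : sa^2 = A := Real.sq_sqrt hA.le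
  have hsb2 : sb^2 = B := Real.sq_sqrt hB.le
  have hsap : 0 < sa := Real.sqrt_pos.mpr hA
  have hsbp : 0 < sb := Real.sqrt_pos.mpr hB
  set ts : ℝ := ε * (Real.log A - Real.log B) / 2 with hts
  have hexp : Real.exp (ts/ε) = sa / sb := by
    have h0 : ts/ε = (Real.log A - Real.log B)/2 := by
      rw [hts]; field_simp
    rw [h0, sub_div, Real.exp_sub]
    rw [show Real.log A / 2 = Real.log sa by rw [hsa, Real.log_sqrt hA.le]]
    rw [show Real.log B / 2 = Real.log sb by rw [hsb, Real.log_sqrt hB.le]]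
    rw [Real.exp_log hsap, Real.exp_log hsbp]
  have hexpneg : Real.exp (-ts/ε) = sb / sa := by
    rw [neg_div, Real.exp_neg, hexp, inv_div]
  have h1 := h ts
  rw [hexp, hexpneg] at h1
  have e1 : A * (sb/sa) = sa * sb := by rw [← hsa2]; field_simp
  have e2 : B * (sa/sb) = sa * sb := by rw [← hsb2]; field_simp
  rw [e1, e2] at h1
  set ρ : ℝ := Real.exp (th/ε) with hρ
  have hρp : 0 < ρ := Real.exp_pos _
  have hneg : Real.exp (-th/ε) = ρ⁻¹ := by rw [neg_div, Real.exp_neg]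
  rw [hneg] at h1 ⊢
  -- h1 : A * ρ⁻¹ + B * ρ ≤ sa*sb + sa*sb
  have hmul : A + B * ρ^2 ≤ 2*sa*sb*ρ := by
    have := mul_le_mul_of_nonneg_right h1 hρp.le
    have hAρ : A * ρ⁻¹ * ρ = A := by field_simp
    nlinarith [this]
  have hsq : (sa - sb*ρ)^2 ≤ 0 := by nlinarith [hmul]
  have hz : sa - sb*ρ = 0 := by
    have h3 : (sa - sb*ρ)^2 = 0 := le_antisymm hsq (sq_nonneg _)
    exact (pow_eq_zero_iff two_ne_zero).mp h3
  have hAe : A = B * ρ^2 := by nlinarith [hz]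
  rw [hAe]
  field_simp


lemma sum_update_gen {m : ℕ} (g : Fin m → ℝ) (j0 : Fin m) (t : ℝ) (F : Fin m → ℝ → ℝ) :
    ∑ j, F j (Function.update g j0 t j) = (∑ j, F j (g j)) + (F j0 t - F j0 (g j0)) := by
  classical
  have h1 : ∑ j, F j (Function.update g j0 t j)
      = F j0 (Function.update g j0 t j0) + ∑ j ∈ univ.erase j0, F j (Function.update g j0 t j) :=
    (Finset.add_sum_erase _ _ (mem_univ j0)).symm
  have h2 : ∑ j ∈ univ.erase j0, F j (Function.update g j0 t j)
      = ∑ j ∈ univ.erase j0, F j (g j) :=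
    Finset.sum_congr rfl (fun j hj => by rw [Function.update_of_ne (Finset.ne_of_mem_erase hj)])
  have h3 : ∑ j, F j (g j) = F j0 (g j0) + ∑ j ∈ univ.erase j0, F j (g j) :=
    (Finset.add_sum_erase _ _ (mem_univ j0)).symm
  rw [h1, h2, Function.update_self, h3]
  ring

lemma stationarity1 {m1 m2 m3 : ℕ} [Nonempty (Fin m1)] [Nonempty (Fin m2)] [Nonempty (Fin m3)]
    (a : Fin m1 → ℝ) (b : Fin m3 → ℝ) (ε : ℝ) (hε : 0 < ε)
    (C1 : Matrix (Fin m1) (Fin m2) ℝ) (C2 : Matrix (Fin m2) (Fin m3) ℝ)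
    (ha : ∀ j, 0 < a j)
    (f1h : Fin m1 → ℝ) (f2h : Fin m2 → ℝ) (f3h : Fin m3 → ℝ)
    (hopt : ∀ f1, dual2 a b ε C1 C2 f1 f2h f3h ≤ dual2 a b ε C1 C2 f1h f2h f3h)
    (j0 : Fin m1) :
    (∑ k, Real.exp ((- f2h k - C1 j0 k)/ε)) * Real.exp (f1h j0 / ε) = a j0 := by
  set c := ∑ k, Real.exp ((- f2h k - C1 j0 k)/ε) with hcdef
  have hcpos : 0 < c := Finset.sum_pos (fun k _ => Real.exp_pos _) univ_nonempty
  apply max_lin_exp (ha j0) hcpos hε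
  intro t
  have h := hopt (Function.update f1h j0 t)
  unfold dual2 at h
  have hG : ∀ s : ℝ, ∑ k, Real.exp ((s - f2h k - C1 j0 k)/ε) = c * Real.exp (s/ε) := by
    intro s
    rw [hcdef, Finset.sum_mul]
    apply Finset.sum_congr rfl
    intro k _
    rw [← Real.exp_add]
    congr 1
    ring
  have e1 := sum_update_gen f1h j0 t (fun j s => s * a j)
  have e2 := sum_update_gen f1h j0 t (fun j s => ∑ k, Real.exp ((s - f2h k - C1 j k)/ε))
  rw [hG t, hG (f1h j0)] at e2
  rw [e1, e2] at h
  linarith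

lemma stationarity3 {m1 m2 m3 : ℕ} [Nonempty (Fin m1)] [Nonempty (Fin m2)] [Nonempty (Fin m3)]
    (a : Fin m1 → ℝ) (b : Fin m3 → ℝ) (ε : ℝ) (hε : 0 < ε)
    (C1 : Matrix (Fin m1) (Fin m2) ℝ) (C2 : Matrix (Fin m2) (Fin m3) ℝ)
    (hb : ∀ l, 0 < b l)
    (f1h : Fin m1 → ℝ) (f2h : Fin m2 → ℝ) (f3h : Fin m3 → ℝ)
    (hopt : ∀ f3, dual2 a b ε C1 C2 f1h f2h f3 ≤ dual2 a b ε C1 C2 f1h f2h f3h)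
    (l0 : Fin m3) :
    (∑ k, Real.exp ((f2h k - C2 k l0)/ε)) * Real.exp (f3h l0 / ε) = b l0 := by
  set c := ∑ k, Real.exp ((f2h k - C2 k l0)/ε) with hcdef
  have hcpos : 0 < c := Finset.sum_pos (fun k _ => Real.exp_pos _) univ_nonempty
  apply max_lin_exp (hb l0) hcpos hε
  intro t
  have h := hopt (Function.update f3h l0 t)
  unfold dual2 at h
  have hcomm : ∀ f3 : Fin m3 → ℝ, ∑ k, ∑ l, Real.exp ((f2h k + f3 l - C2 k l) / ε)
      = ∑ l, ∑ k, Real.exp ((f2h k + f3 l - C2 k l) / ε) := fun f3 => Finset.sum_comm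
  rw [hcomm] at h
  rw [hcomm] at h
  have hG : ∀ s : ℝ, ∑ k, Real.exp ((f2h k + s - C2 k l0)/ε) = c * Real.exp (s/ε) := by
    intro s
    rw [hcdef, Finset.sum_mul]
    apply Finset.sum_congr rfl
    intro k _
    rw [← Real.exp_add]
    congr 1
    ring
  have e1 := sum_update_gen f3h l0 t (fun l s => s * b l)
  have e2 := sum_update_gen f3h l0 t (fun l s => ∑ k, Real.exp ((f2h k + s - C2 k l)/ε))
  rw [hG t, hG (f3h l0)] at e2
  rw [e1, e2] at h
  linarith

lemma stationarity2 {m1 m2 m3 : ℕ} [Nonempty (Fin m1)] [Nonempty (Fin m2)] [Nonempty (Fin m3)]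
    (a : Fin m1 → ℝ) (b : Fin m3 → ℝ) (ε : ℝ) (hε : 0 < ε)
    (C1 : Matrix (Fin m1) (Fin m2) ℝ) (C2 : Matrix (Fin m2) (Fin m3) ℝ)
    (f1h : Fin m1 → ℝ) (f2h : Fin m2 → ℝ) (f3h : Fin m3 → ℝ)
    (hopt : ∀ f2, dual2 a b ε C1 C2 f1h f2 f3h ≤ dual2 a b ε C1 C2 f1h f2h f3h)
    (k0 : Fin m2) :
    (∑ j, Real.exp ((f1h j - C1 j k0)/ε)) * Real.exp (-f2h k0 / ε)
      = (∑ l, Real.exp ((f3h l - C2 k0 l)/ε)) * Real.exp (f2h k0 / ε) := by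
  set A := ∑ j, Real.exp ((f1h j - C1 j k0)/ε) with hAdef
  set B := ∑ l, Real.exp ((f3h l - C2 k0 l)/ε) with hBdef
  have hApos : 0 < A := Finset.sum_pos (fun j _ => Real.exp_pos _) univ_nonempty
  have hBpos : 0 < B := Finset.sum_pos (fun l _ => Real.exp_pos _) univ_nonempty
  apply max_twoexp hApos hBpos hε
  intro t
  have h := hopt (Function.update f2h k0 t)
  unfold dual2 at h
  have hcomm : ∀ f2 : Fin m2 → ℝ, ∑ j, ∑ k, Real.exp ((f1h j - f2 k - C1 j k) / ε)
      = ∑ k, ∑ j, Real.exp ((f1h j - f2 k - C1 j k) / ε) := fun f2 => Finset.sum_comm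
  rw [hcomm, hcomm] at h
  have hGA : ∀ s : ℝ, ∑ j, Real.exp ((f1h j - s - C1 j k0)/ε) = A * Real.exp (-s/ε) := by
    intro s
    rw [hAdef, Finset.sum_mul]
    apply Finset.sum_congr rfl
    intro j _
    rw [← Real.exp_add]
    congr 1
    ring
  have hGB : ∀ s : ℝ, ∑ l, Real.exp ((s + f3h l - C2 k0 l)/ε) = B * Real.exp (s/ε) := by
    intro s
    rw [hBdef, Finset.sum_mul]
    apply Finset.sum_congr rfl
    intro l _
    rw [← Real.exp_add]
    congr 1
    ring
  have e1 := sum_update_gen f2h k0 t (fun k s => ∑ j, Real.exp ((f1h j - s - C1 j k)/ε))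
  have e2 := sum_update_gen f2h k0 t (fun k s => ∑ l, Real.exp ((s + f3h l - C2 k l)/ε))
  rw [hGA t, hGA (f2h k0)] at e1
  rw [hGB t, hGB (f2h k0)] at e2
  rw [e1, e2] at h
  have h2 : 0 ≤ ε * ((A*Real.exp (-t/ε) + B*Real.exp (t/ε))
      - (A*Real.exp (-f2h k0/ε) + B*Real.exp (f2h k0/ε))) := by linarith
  have h3 := (mul_nonneg_iff_of_pos_left hε).mp h2
  linarith


/-- **Convergence of the marginals for `M = 2`** (Prop. 3.7): the edge marginals of the
induced matrices are exactly `a` and `b`, and the two boundary marginals converge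
exponentially in the Hilbert pseudometric. -/
theorem sinkhorn_marginal_convergence_M2
    {m1 m2 m3 : ℕ} (hm1 : 0 < m1) (hm2 : 0 < m2) (hm3 : 0 < m3)
    (C1 : Matrix (Fin m1) (Fin m2) ℝ) (C2 : Matrix (Fin m2) (Fin m3) ℝ)
    (hC1 : ∀ j k, 0 ≤ C1 j k) (hC2 : ∀ k l, 0 ≤ C2 k l)
    (a : Fin m1 → ℝ) (b : Fin m3 → ℝ)
    (ha : ∀ j, 0 < a j) (hb : ∀ l, 0 < b l)
    (hasum : ∑ j, a j = 1) (hbsum : ∑ l, b l = 1)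
    (ε : ℝ) (hε : 0 < ε)
    (K1 : Matrix (Fin m1) (Fin m2) ℝ) (K2 : Matrix (Fin m2) (Fin m3) ℝ)
    (hK1 : ∀ j k, K1 j k = Real.exp (-C1 j k / ε))
    (hK2 : ∀ k l, K2 k l = Real.exp (-C2 k l / ε))
    (u1 : ℕ → Fin m1 → ℝ) (u2 : ℕ → Fin m2 → ℝ) (u3 : ℕ → Fin m3 → ℝ)
    (h01 : ∀ j, 0 < u1 0 j) (h02 : ∀ k, 0 < u2 0 k) (h03 : ∀ l, 0 < u3 0 l)
    (hrec2 : ∀ n, u2 (n+1) = fun k => Real.sqrt ((K1ᵀ *ᵥ u1 n) k / (K2 *ᵥ u3 n) k))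
    (hrec1 : ∀ n, u1 (n+1) = fun j => a j / (K1 *ᵥ fun k => (u2 (n+1) k)⁻¹) j)
    (hrec3 : ∀ n, u3 (n+1) = fun l => b l / (K2ᵀ *ᵥ u2 (n+1)) l)
    (uh1 : Fin m1 → ℝ) (uh2 : Fin m2 → ℝ) (uh3 : Fin m3 → ℝ)
    (hpos1 : ∀ j, 0 < uh1 j) (hpos2 : ∀ k, 0 < uh2 k) (hpos3 : ∀ l, 0 < uh3 l)
    (hopt : ∀ (f1 : Fin m1 → ℝ) (f2 : Fin m2 → ℝ) (f3 : Fin m3 → ℝ),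
      dual2 a b ε C1 C2 f1 f2 f3 ≤
        dual2 a b ε C1 C2 (fun j => ε * Real.log (uh1 j))
          (fun k => ε * Real.log (uh2 k)) (fun l => ε * Real.log (uh3 l)))
    (D d : ℝ)
    (hD : D = max (birkhoffLambda K1) (birkhoffLambda K2))
    (hd : d = max (dH (u1 0) uh1) (dH (u3 0) uh3)) :
    ∀ n : ℕ, 1 ≤ n →
      dH a (indMat1 (u1 n) K1 (u2 n) *ᵥ fun _ => 1) = 0 ∧
      dH b ((indMat2 (u2 n) K2 (u3 n))ᵀ *ᵥ fun _ => 1) = 0 ∧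
      dH ((indMat1 (u1 n) K1 (u2 n))ᵀ *ᵥ fun _ => 1)
          (indMat2 (u2 n) K2 (u3 n) *ᵥ fun _ => 1)
        ≤ 2 * d * (1 + D ^ 2) * D ^ (2 * n - 1) := by
  haveI hne1 : Nonempty (Fin m1) := Fin.pos_iff_nonempty.mp hm1
  haveI hne2 : Nonempty (Fin m2) := Fin.pos_iff_nonempty.mp hm2
  haveI hne3 : Nonempty (Fin m3) := Fin.pos_iff_nonempty.mp hm3
  have hK1pos : ∀ j k, 0 < K1 j k := fun j k => by rw [hK1]; exact Real.exp_pos _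
  have hK2pos : ∀ k l, 0 < K2 k l := fun k l => by rw [hK2]; exact Real.exp_pos _
  have hK1tpos : ∀ k j, 0 < K1ᵀ k j := fun k j => hK1pos j k
  have hK2tpos : ∀ l k, 0 < K2ᵀ l k := fun l k => hK2pos k l
  -- positivity of the iterates
  have upos : ∀ n, (∀ j, 0 < u1 n j) ∧ (∀ k, 0 < u2 n k) ∧ (∀ l, 0 < u3 n l) := by
    intro n
    induction n with
    | zero => exact ⟨h01, h02, h03⟩
    | succ n ih =>
      obtain ⟨ih1, ih2, ih3⟩ := ih
      have h2' : ∀ k, 0 < u2 (n+1) k := by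
        intro k
        rw [hrec2 n]
        exact Real.sqrt_pos.mpr (div_pos (mulVec_pos hK1tpos ih1 k) (mulVec_pos hK2pos ih3 k))
      refine ⟨?_, h2', ?_⟩
      · intro j
        rw [hrec1 n]
        exact div_pos (ha j) (mulVec_pos hK1pos (fun k => inv_pos.mpr (h2' k)) j)
      · intro l
        rw [hrec3 n]
        exact div_pos (hb l) (mulVec_pos hK2tpos h2' l)
  have hu1 : ∀ n j, 0 < u1 n j := fun n => (upos n).1
  have hu2 : ∀ n k, 0 < u2 n k := fun n => (upos n).2.1
  have hu3 : ∀ n l, 0 < u3 n l := fun n => (upos n).2.2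
  -- dual potentials
  set f1h : Fin m1 → ℝ := fun j => ε * Real.log (uh1 j) with hf1h
  set f2h : Fin m2 → ℝ := fun k => ε * Real.log (uh2 k) with hf2h
  set f3h : Fin m3 → ℝ := fun l => ε * Real.log (uh3 l) with hf3h
  have hexp1 : ∀ j, Real.exp (f1h j / ε) = uh1 j := by
    intro j
    rw [hf1h]
    simp only
    rw [mul_comm, mul_div_assoc, div_self (ne_of_gt hε), mul_one, Real.exp_log (hpos1 j)]
  have hexp2 : ∀ k, Real.exp (f2h k / ε) = uh2 k := by
    intro k
    rw [hf2h]
    simp only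
    rw [mul_comm, mul_div_assoc, div_self (ne_of_gt hε), mul_one, Real.exp_log (hpos2 k)]
  have hexp3 : ∀ l, Real.exp (f3h l / ε) = uh3 l := by
    intro l
    rw [hf3h]
    simp only
    rw [mul_comm, mul_div_assoc, div_self (ne_of_gt hε), mul_one, Real.exp_log (hpos3 l)]
  have hexp2inv : ∀ k, Real.exp (-f2h k / ε) = (uh2 k)⁻¹ := by
    intro k
    rw [show -f2h k/ε = -(f2h k/ε) by ring, Real.exp_neg, hexp2 k]
  -- stationarity identities
  have hsum1 : ∀ j, (∑ k, Real.exp ((- f2h k - C1 j k)/ε)) = (K1 *ᵥ fun k => (uh2 k)⁻¹) j := by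
    intro j
    simp only [Matrix.mulVec, dotProduct]
    apply Finset.sum_congr rfl
    intro k _
    rw [show (- f2h k - C1 j k)/ε = -f2h k/ε + -C1 j k/ε by ring, Real.exp_add,
      hexp2inv k, hK1 j k, mul_comm]
  have hKinv2pos : ∀ j, 0 < (K1 *ᵥ fun k => (uh2 k)⁻¹) j :=
    mulVec_pos hK1pos (fun k => inv_pos.mpr (hpos2 k))
  have stat1 : ∀ j, uh1 j * (K1 *ᵥ fun k => (uh2 k)⁻¹) j = a j := by
    intro j
    have h := stationarity1 a b ε hε C1 C2 ha f1h f2h f3h (fun f1 => hopt f1 f2h f3h) j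
    rw [hsum1 j, hexp1 j] at h
    rw [mul_comm]
    exact h
  have fix1 : uh1 = fun j => a j / (K1 *ᵥ fun k => (uh2 k)⁻¹) j := by
    funext j
    rw [eq_div_iff (ne_of_gt (hKinv2pos j))]
    exact stat1 j
  have hsum3 : ∀ l, (∑ k, Real.exp ((f2h k - C2 k l)/ε)) = (K2ᵀ *ᵥ uh2) l := by
    intro l
    simp only [Matrix.mulVec, dotProduct, Matrix.transpose_apply]
    apply Finset.sum_congr rfl
    intro k _
    rw [show (f2h k - C2 k l)/ε = f2h k/ε + -C2 k l/ε by ring, Real.exp_add,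
      hexp2 k, hK2 k l, mul_comm]
  have hK2tu2pos : ∀ l, 0 < (K2ᵀ *ᵥ uh2) l := mulVec_pos hK2tpos hpos2
  have stat3 : ∀ l, uh3 l * (K2ᵀ *ᵥ uh2) l = b l := by
    intro l
    have h := stationarity3 a b ε hε C1 C2 hb f1h f2h f3h (fun f3 => hopt f1h f2h f3) l
    rw [hsum3 l, hexp3 l] at h
    rw [mul_comm]
    exact h
  have fix3 : uh3 = fun l => b l / (K2ᵀ *ᵥ uh2) l := by
    funext l
    rw [eq_div_iff (ne_of_gt (hK2tu2pos l))]
    exact stat3 l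
  have hsumA : ∀ k, (∑ j, Real.exp ((f1h j - C1 j k)/ε)) = (K1ᵀ *ᵥ uh1) k := by
    intro k
    simp only [Matrix.mulVec, dotProduct, Matrix.transpose_apply]
    apply Finset.sum_congr rfl
    intro j _
    rw [show (f1h j - C1 j k)/ε = f1h j/ε + -C1 j k/ε by ring, Real.exp_add,
      hexp1 j, hK1 j k, mul_comm]
  have hsumB : ∀ k, (∑ l, Real.exp ((f3h l - C2 k l)/ε)) = (K2 *ᵥ uh3) k := by
    intro k
    simp only [Matrix.mulVec, dotProduct]
    apply Finset.sum_congr rfl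
    intro l _
    rw [show (f3h l - C2 k l)/ε = f3h l/ε + -C2 k l/ε by ring, Real.exp_add,
      hexp3 l, hK2 k l, mul_comm]
  have hK1tu1pos : ∀ k, 0 < (K1ᵀ *ᵥ uh1) k := mulVec_pos hK1tpos hpos1
  have hK2u3pos : ∀ k, 0 < (K2 *ᵥ uh3) k := mulVec_pos hK2pos hpos3
  have stat2 : ∀ k, (K1ᵀ *ᵥ uh1) k * (uh2 k)⁻¹ = (K2 *ᵥ uh3) k * uh2 k := by
    intro k
    have h := stationarity2 a b ε hε C1 C2 f1h f2h f3h (fun f2 => hopt f1h f2 f3h) k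
    rw [hsumA k, hsumB k, hexp2inv k, hexp2 k] at h
    exact h
  have fix2 : uh2 = fun k => Real.sqrt ((K1ᵀ *ᵥ uh1) k / (K2 *ᵥ uh3) k) := by
    funext k
    have h := stat2 k
    have hX : (K1ᵀ *ᵥ uh1) k / (K2 *ᵥ uh3) k = (uh2 k)^2 := by
      rw [div_eq_iff (ne_of_gt (hK2u3pos k))]
      have hne := ne_of_gt (hpos2 k)
      field_simp at h
      nlinarith [h]
    rw [hX, Real.sqrt_sq (hpos2 k).le]
  -- marginal computations
  have ind1_apply : ∀ (u : Fin m1 → ℝ) (v : Fin m2 → ℝ) (j : Fin m1) (k : Fin m2),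
      indMat1 u K1 v j k = u j * K1 j k * (v k)⁻¹ := by
    intro u v j k
    unfold indMat1
    rw [Matrix.mul_diagonal, Matrix.diagonal_mul]
  have ind2_apply : ∀ (v : Fin m2 → ℝ) (w : Fin m3 → ℝ) (k : Fin m2) (l : Fin m3),
      indMat2 v K2 w k l = v k * K2 k l * w l := by
    intro v w k l
    unfold indMat2
    rw [Matrix.mul_diagonal, Matrix.diagonal_mul]
  have marg1 : ∀ n : ℕ, (indMat1 (u1 (n+1)) K1 (u2 (n+1)) *ᵥ fun _ => (1:ℝ)) = a := by
    intro n
    funext j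
    simp only [Matrix.mulVec, dotProduct, ind1_apply, mul_one]
    rw [show (∑ k, u1 (n+1) j * K1 j k * (u2 (n+1) k)⁻¹)
        = u1 (n+1) j * ∑ k, K1 j k * (u2 (n+1) k)⁻¹ from by
      rw [Finset.mul_sum]; exact Finset.sum_congr rfl fun k _ => by ring]
    have he : (∑ k, K1 j k * (u2 (n+1) k)⁻¹) = (K1 *ᵥ fun k => (u2 (n+1) k)⁻¹) j := by
      simp [Matrix.mulVec, dotProduct]
    rw [he, hrec1 n]
    simp only
    exact div_mul_cancel₀ _ (ne_of_gt (mulVec_pos hK1pos (fun k => inv_pos.mpr (hu2 (n+1) k)) j))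
  have marg1t : ∀ n : ℕ, ((indMat1 (u1 n) K1 (u2 n))ᵀ *ᵥ fun _ => (1:ℝ))
      = fun k => (K1ᵀ *ᵥ u1 n) k / u2 n k := by
    intro n
    funext k
    simp only [Matrix.mulVec, dotProduct, Matrix.transpose_apply, ind1_apply, mul_one]
    rw [div_eq_mul_inv, Finset.sum_mul]
    apply Finset.sum_congr rfl
    intro j _
    ring
  have marg2 : ∀ n : ℕ, (indMat2 (u2 n) K2 (u3 n) *ᵥ fun _ => (1:ℝ))
      = fun k => u2 n k * (K2 *ᵥ u3 n) k := by
    intro n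
    funext k
    simp only [Matrix.mulVec, dotProduct, ind2_apply, mul_one]
    rw [Finset.mul_sum]
    apply Finset.sum_congr rfl
    intro l _
    ring
  have marg2tb : ∀ n : ℕ, ((indMat2 (u2 (n+1)) K2 (u3 (n+1)))ᵀ *ᵥ fun _ => (1:ℝ)) = b := by
    intro n
    funext l
    simp only [Matrix.mulVec, dotProduct, Matrix.transpose_apply, ind2_apply, mul_one]
    rw [show (∑ k, u2 (n+1) k * K2 k l * u3 (n+1) l)
        = (∑ k, K2 k l * u2 (n+1) k) * u3 (n+1) l from by
      rw [Finset.sum_mul]; exact Finset.sum_congr rfl fun k _ => by ring]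
    have he : (∑ k, K2 k l * u2 (n+1) k) = (K2ᵀ *ᵥ u2 (n+1)) l := by
      simp [Matrix.mulVec, dotProduct]
    rw [he, hrec3 n]
    simp only
    rw [mul_comm]
    exact div_mul_cancel₀ _ (ne_of_gt (mulVec_pos hK2tpos (hu2 (n+1)) l))
  -- contraction machinery
  have hlam1 : birkhoffLambda K1 ≤ D := hD ▸ le_max_left _ _
  have hlam2 : birkhoffLambda K2 ≤ D := hD ▸ le_max_right _ _
  have hDnn : 0 ≤ D := le_trans (lambda_nonneg hK1pos) hlam1
  have hdnn : 0 ≤ d := hd ▸ le_trans (dH_nonneg h01 hpos1) (le_max_left _ _)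
  have step2 : ∀ n : ℕ, dH (u2 (n+1)) uh2 ≤ D * max (dH (u1 n) uh1) (dH (u3 n) uh3) := by
    intro n
    rw [hrec2 n]
    conv_lhs => rw [fix2]
    rw [dH_sqrt (fun k => div_pos (mulVec_pos hK1tpos (hu1 n) k) (mulVec_pos hK2pos (hu3 n) k))
      (fun k => div_pos (hK1tu1pos k) (hK2u3pos k))]
    have hstep := dH_div_le (u := K1ᵀ *ᵥ u1 n) (v := K2 *ᵥ u3 n) (u' := K1ᵀ *ᵥ uh1)
      (v' := K2 *ᵥ uh3) (mulVec_pos hK1tpos (hu1 n)) (mulVec_pos hK2pos (hu3 n))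
      hK1tu1pos hK2u3pos
    have hb1 : dH (K1ᵀ *ᵥ u1 n) (K1ᵀ *ᵥ uh1) ≤ birkhoffLambda K1 * dH (u1 n) uh1 := by
      have h := birkhoff_contract hK1tpos (hu1 n) hpos1
      rwa [birkhoffLambda_transpose] at h
    have hb2 : dH (K2 *ᵥ uh3) (K2 *ᵥ u3 n) ≤ birkhoffLambda K2 * dH (u3 n) uh3 := by
      have h := birkhoff_contract hK2pos hpos3 (hu3 n)
      rwa [dH_comm (u := uh3) (v := u3 n)] at h
    have hδ1nn : 0 ≤ dH (u1 n) uh1 := dH_nonneg (hu1 n) hpos1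
    have hδ3nn : 0 ≤ dH (u3 n) uh3 := dH_nonneg (hu3 n) hpos3
    have hm1' : birkhoffLambda K1 * dH (u1 n) uh1
        ≤ D * max (dH (u1 n) uh1) (dH (u3 n) uh3) :=
      mul_le_mul hlam1 (le_max_left _ _) hδ1nn hDnn
    have hm3' : birkhoffLambda K2 * dH (u3 n) uh3
        ≤ D * max (dH (u1 n) uh1) (dH (u3 n) uh3) :=
      mul_le_mul hlam2 (le_max_right _ _) hδ3nn hDnn
    linarith
  have step1 : ∀ n : ℕ, dH (u1 (n+1)) uh1 ≤ D * dH (u2 (n+1)) uh2 := by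
    intro n
    rw [hrec1 n]
    conv_lhs => rw [fix1]
    have hstep := dH_div_le (u := a) (v := K1 *ᵥ fun k => (u2 (n+1) k)⁻¹) (u' := a)
      (v' := K1 *ᵥ fun k => (uh2 k)⁻¹) ha
      (mulVec_pos hK1pos (fun k => inv_pos.mpr (hu2 (n+1) k))) ha hKinv2pos
    have hb1 : dH (K1 *ᵥ fun k => (uh2 k)⁻¹) (K1 *ᵥ fun k => (u2 (n+1) k)⁻¹)
        ≤ birkhoffLambda K1 * dH (u2 (n+1)) uh2 := by
      have h := birkhoff_contract hK1pos (fun k => inv_pos.mpr (hpos2 k))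
        (fun k => inv_pos.mpr (hu2 (n+1) k))
      rwa [dH_inv] at h
    have h0 : dH a a = 0 := dH_self ha
    have hδ2nn : 0 ≤ dH (u2 (n+1)) uh2 := dH_nonneg (hu2 (n+1)) hpos2
    have := mul_le_mul_of_nonneg_right hlam1 hδ2nn
    linarith
  have step3 : ∀ n : ℕ, dH (u3 (n+1)) uh3 ≤ D * dH (u2 (n+1)) uh2 := by
    intro n
    rw [hrec3 n]
    conv_lhs => rw [fix3]
    have hstep := dH_div_le (u := b) (v := K2ᵀ *ᵥ u2 (n+1)) (u' := b)
      (v' := K2ᵀ *ᵥ uh2) hb (mulVec_pos hK2tpos (hu2 (n+1))) hb hK2tu2pos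
    have hb1 : dH (K2ᵀ *ᵥ uh2) (K2ᵀ *ᵥ u2 (n+1))
        ≤ birkhoffLambda K2 * dH (u2 (n+1)) uh2 := by
      have h := birkhoff_contract hK2tpos hpos2 (hu2 (n+1))
      rwa [birkhoffLambda_transpose, dH_comm (u := uh2) (v := u2 (n+1))] at h
    have h0 : dH b b = 0 := dH_self hb
    have hδ2nn : 0 ≤ dH (u2 (n+1)) uh2 := dH_nonneg (hu2 (n+1)) hpos2
    have := mul_le_mul_of_nonneg_right hlam2 hδ2nn
    linarith
  have keyE : ∀ n : ℕ, max (dH (u1 n) uh1) (dH (u3 n) uh3) ≤ D^(2*n) * d := by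
    intro n
    induction n with
    | zero =>
      rw [hd]
      norm_num
    | succ n ih =>
      have hδ2 : dH (u2 (n+1)) uh2 ≤ D^(2*n+1) * d := by
        calc dH (u2 (n+1)) uh2 ≤ D * max (dH (u1 n) uh1) (dH (u3 n) uh3) := step2 n
          _ ≤ D * (D^(2*n) * d) := mul_le_mul_of_nonneg_left ih hDnn
          _ = D^(2*n+1) * d := by ring
      apply max_le
      · calc dH (u1 (n+1)) uh1 ≤ D * dH (u2 (n+1)) uh2 := step1 n
          _ ≤ D * (D^(2*n+1) * d) := mul_le_mul_of_nonneg_left hδ2 hDnn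
          _ = D^(2*(n+1)) * d := by ring
      · calc dH (u3 (n+1)) uh3 ≤ D * dH (u2 (n+1)) uh2 := step3 n
          _ ≤ D * (D^(2*n+1) * d) := mul_le_mul_of_nonneg_left hδ2 hDnn
          _ = D^(2*(n+1)) * d := by ring
  have keyδ2 : ∀ n : ℕ, dH (u2 (n+1)) uh2 ≤ D^(2*n+1) * d := by
    intro n
    calc dH (u2 (n+1)) uh2 ≤ D * max (dH (u1 n) uh1) (dH (u3 n) uh3) := step2 n
      _ ≤ D * (D^(2*n) * d) := mul_le_mul_of_nonneg_left (keyE n) hDnn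
      _ = D^(2*n+1) * d := by ring
  -- final assembly
  intro n hn
  obtain ⟨m, rfl⟩ : ∃ m, n = m + 1 := ⟨n - 1, by omega⟩
  refine ⟨?_, ?_, ?_⟩
  · rw [marg1 m]
    exact dH_self ha
  · rw [marg2tb m]
    exact dH_self hb
  · rw [marg1t (m+1), marg2 (m+1)]
    have hv1pos : ∀ k, 0 < (K1ᵀ *ᵥ u1 (m+1)) k / u2 (m+1) k :=
      fun k => div_pos (mulVec_pos hK1tpos (hu1 (m+1)) k) (hu2 (m+1) k)
    have hv2pos : ∀ k, 0 < u2 (m+1) k * (K2 *ᵥ u3 (m+1)) k :=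
      fun k => mul_pos (hu2 (m+1) k) (mulVec_pos hK2pos (hu3 (m+1)) k)
    have hZpos : ∀ k, 0 < (K1ᵀ *ᵥ uh1) k / uh2 k :=
      fun k => div_pos (hK1tu1pos k) (hpos2 k)
    have hZeq : (fun k => (K1ᵀ *ᵥ uh1) k / uh2 k) = fun k => uh2 k * (K2 *ᵥ uh3) k := by
      funext k
      rw [div_eq_mul_inv, stat2 k, mul_comm]
    have tri := dH_triangle (u := fun k => (K1ᵀ *ᵥ u1 (m+1)) k / u2 (m+1) k)
      (v := fun k => (K1ᵀ *ᵥ uh1) k / uh2 k)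
      (w := fun k => u2 (m+1) k * (K2 *ᵥ u3 (m+1)) k)
      hv1pos hZpos hv2pos
    have hδ1 : dH (u1 (m+1)) uh1 ≤ D^(2*(m+1)) * d :=
      le_trans (le_max_left _ _) (keyE (m+1))
    have hδ3 : dH (u3 (m+1)) uh3 ≤ D^(2*(m+1)) * d :=
      le_trans (le_max_right _ _) (keyE (m+1))
    have hδ2 : dH (u2 (m+1)) uh2 ≤ D^(2*m+1) * d := keyδ2 m
    have bound1 : dH (fun k => (K1ᵀ *ᵥ u1 (m+1)) k / u2 (m+1) k)
        (fun k => (K1ᵀ *ᵥ uh1) k / uh2 k)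
        ≤ D * (D^(2*(m+1)) * d) + D^(2*m+1) * d := by
      have hstep := dH_div_le (u := K1ᵀ *ᵥ u1 (m+1)) (v := u2 (m+1)) (u' := K1ᵀ *ᵥ uh1)
        (v' := uh2) (mulVec_pos hK1tpos (hu1 (m+1))) (hu2 (m+1)) hK1tu1pos hpos2
      have hb1 : dH (K1ᵀ *ᵥ u1 (m+1)) (K1ᵀ *ᵥ uh1)
          ≤ birkhoffLambda K1 * dH (u1 (m+1)) uh1 := by
        have h := birkhoff_contract hK1tpos (hu1 (m+1)) hpos1
        rwa [birkhoffLambda_transpose] at h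
      have h2 : birkhoffLambda K1 * dH (u1 (m+1)) uh1 ≤ D * (D^(2*(m+1)) * d) :=
        mul_le_mul hlam1 hδ1 (dH_nonneg (hu1 (m+1)) hpos1) hDnn
      have h3 : dH uh2 (u2 (m+1)) ≤ D^(2*m+1) * d := by
        rw [dH_comm (u := uh2) (v := u2 (m+1))]
        exact hδ2
      linarith
    have bound2 : dH (fun k => (K1ᵀ *ᵥ uh1) k / uh2 k)
        (fun k => u2 (m+1) k * (K2 *ᵥ u3 (m+1)) k)
        ≤ D^(2*m+1) * d + D * (D^(2*(m+1)) * d) := by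
      rw [hZeq]
      have hstep := dH_mul_le (u := uh2) (v := K2 *ᵥ uh3) (u' := u2 (m+1))
        (v' := K2 *ᵥ u3 (m+1)) hpos2 hK2u3pos (hu2 (m+1)) (mulVec_pos hK2pos (hu3 (m+1)))
      have hb2 : dH (K2 *ᵥ uh3) (K2 *ᵥ u3 (m+1))
          ≤ birkhoffLambda K2 * dH (u3 (m+1)) uh3 := by
        have h := birkhoff_contract hK2pos hpos3 (hu3 (m+1))
        rwa [dH_comm (u := uh3) (v := u3 (m+1))] at h
      have h2 : birkhoffLambda K2 * dH (u3 (m+1)) uh3 ≤ D * (D^(2*(m+1)) * d) :=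
        mul_le_mul hlam2 hδ3 (dH_nonneg (hu3 (m+1)) hpos3) hDnn
      have h3 : dH uh2 (u2 (m+1)) ≤ D^(2*m+1) * d := by
        rw [dH_comm (u := uh2) (v := u2 (m+1))]
        exact hδ2
      linarith
    have hfin : dH (fun k => (K1ᵀ *ᵥ u1 (m+1)) k / u2 (m+1) k)
        (fun k => u2 (m+1) k * (K2 *ᵥ u3 (m+1)) k)
        ≤ 2 * (D^(2*m+1) * d) + 2 * (D * (D^(2*(m+1)) * d)) := by linarith
    have hexp : 2 * (m+1) - 1 = 2*m+1 := by omega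
    rw [hexp]
    refine le_trans hfin (le_of_eq ?_)
    ring
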